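/- arXiv:2306.11250 — 2 statements merged into one kernel-verified Lean document; each statement's English description precedes it below -/
import Mathlib

section
/- Let s, τ, u₀ ∈ ℝ with s > 0, τ > 0, and 0 < u₀ < s, and define u : ℝ → ℝ by u(t) = s·exp(2st/τ) / (exp(2st/τ) − 1 + s/u₀). Then for every t ∈ ℝ, u(t) = s/2 if and only if t = (τ/(2s)) · log((s − u₀)/u₀); i.e., the sigmoidal transition point of the mode occurs exactly at time (τ/(2s))·log((s − u₀)/u₀), determined by the initial value u₀ and the target singular value s. -/
open Real

/-- The sigmoidal transition point of the logistic mode trajectory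
`u(t) = s·e^{2st/τ}/(e^{2st/τ} − 1 + s/u₀)`: `u(t) = s/2` holds exactly at time
`t = (τ/(2s))·log((s − u₀)/u₀)`, determined by the initial value `u₀` and the target `s`. -/
theorem logistic_transition_point (s τ u₀ : ℝ) (hs : 0 < s) (hτ : 0 < τ)
    (hu₀ : 0 < u₀) (hu₀s : u₀ < s)
    (u : ℝ → ℝ)
    (hu : u = fun t => s * exp (2 * s * t / τ) / (exp (2 * s * t / τ) - 1 + s / u₀)) :
    ∀ t : ℝ, u t = s / 2 ↔ t = τ / (2 * s) * log ((s - u₀) / u₀) := by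
  intro t
  subst hu
  have hu₀' : u₀ ≠ 0 := hu₀.ne'
  have h1 : (1:ℝ) < s / u₀ := (one_lt_div hu₀).2 hu₀s
  have hE : 0 < exp (2 * s * t / τ) := exp_pos _
  have hD : 0 < exp (2 * s * t / τ) - 1 + s / u₀ := by linarith
  have hratio : 0 < (s - u₀) / u₀ := div_pos (by linarith) hu₀
  constructor
  · intro h
    have h2 : s * exp (2 * s * t / τ) = s / 2 * (exp (2 * s * t / τ) - 1 + s / u₀) :=
      (div_eq_iff hD.ne').1 h
    have h5 : u₀ * exp (2 * s * t / τ) = s - u₀ := by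
      apply mul_left_cancel₀ hs.ne'
      field_simp at h2
      ring_nf at h2 ⊢
      linear_combination s * h2
    have hEeq : exp (2 * s * t / τ) = (s - u₀) / u₀ := by
      rw [eq_div_iff hu₀', mul_comm]; exact h5
    have hlog := congrArg Real.log hEeq
    rw [Real.log_exp] at hlog
    have h6 : 2 * s * t = τ * log ((s - u₀) / u₀) := by
      rw [div_eq_iff hτ.ne'] at hlog
      linarith
    field_simp
    linarith
  · intro h
    have hEeq : exp (2 * s * t / τ) = (s - u₀) / u₀ := by
      rw [h]
      have heq : 2 * s * (τ / (2 * s) * log ((s - u₀) / u₀)) / τ = log ((s - u₀) / u₀) := by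
        field_simp
      rw [heq, Real.exp_log hratio]
    show s * exp (2 * s * t / τ) / (exp (2 * s * t / τ) - 1 + s / u₀) = s / 2
    have hD' : (s - u₀) / u₀ - 1 + s / u₀ ≠ 0 := by rw [← hEeq]; exact hD.ne'
    -- keep
    rw [hEeq, div_eq_div_iff hD' two_ne_zero]
    field_simp
    ring
end

section
/- Let s, u₀ ∈ ℝ with 0 < u₀ < s, and let a, b : ℝ → ℝ be differentiable functions satisfying, for all t ∈ ℝ, a′(t) = b(t)·(s − a(t)·b(t)) and b′(t) = a(t)·(s − a(t)·b(t)), with balanced initialization a(0) = b(0) and a(0)² = u₀. Then for all t ≥ 0 the mode strength satisfies a(t)·b(t) = s·exp(2st) / (exp(2st) − 1 + s/u₀), and hence the corresponding mode of the cumulative weight update follows the trajectory a(t)·b(t) − u₀ = s·exp(2st)/(exp(2st) − 1 + s/u₀) − u₀. -/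
open Real

private lemma aux1' (s E D : ℝ) (hD : D ≠ 0) :
    2 * (s * E / D) * (s - s * E / D) = (s * (E * (2 * s)) * D - s * E * (E * (2 * s))) / D ^ 2 := by
  field_simp

private lemma aux2' (s E D X uu : ℝ) (hD : D ≠ 0) :
    (0:ℝ) = (2 * uu * (s - uu) - 2 * (s * E / D) * (s - s * E / D)) * (X * D)
      + (uu - s * E / D) * (X * (2 * uu - 2 * s) * D + X * (E * (2 * s))) := by
  field_simp
  ring

/-- A function whose derivative vanishes everywhere is constant. -/
lemma const_of_hasDerivAt_zero' {g : ℝ → ℝ} (hg : ∀ t, HasDerivAt g 0 t) (t : ℝ) :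
    g t = g 0 := by
  have hd : Differentiable ℝ g := fun x => (hg x).differentiableAt
  have h0 : ∀ x, deriv g x = 0 := fun x => (hg x).deriv
  exact is_const_of_deriv_eq_zero hd h0 t 0

/-- Main theorem (τ = 1): under the mode-wise gradient flow `a′ = b(s − ab)`,
`b′ = a(s − ab)` with balanced initialization `a(0) = b(0)` of strength `a(0)² = u₀ ∈ (0, s)`,
the mode strength follows `a(t)·b(t) = s·e^{2st}/(e^{2st} − 1 + s/u₀)` for `t ≥ 0`, and hence
the corresponding mode of the cumulative weight update follows the trajectory
`a(t)·b(t) − u₀ = s·e^{2st}/(e^{2st} − 1 + s/u₀) − u₀`. -/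
theorem mode_strength_trajectory (s u₀ : ℝ) (hu₀ : 0 < u₀) (hu₀s : u₀ < s)
    (a b : ℝ → ℝ)
    (ha : ∀ t : ℝ, HasDerivAt a (b t * (s - a t * b t)) t)
    (hb : ∀ t : ℝ, HasDerivAt b (a t * (s - a t * b t)) t)
    (hbal : a 0 = b 0) (hinit : a 0 ^ 2 = u₀) :
    ∀ t : ℝ, 0 ≤ t →
      a t * b t = s * exp (2 * s * t) / (exp (2 * s * t) - 1 + s / u₀) ∧
      a t * b t - u₀ = s * exp (2 * s * t) / (exp (2 * s * t) - 1 + s / u₀) - u₀ := by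
  have hu₀' : u₀ ≠ 0 := ne_of_gt hu₀
  set k : ℝ := s / u₀ with hk_def
  have hk1 : 1 < k := (one_lt_div hu₀).2 hu₀s
  -- the product function, its continuity, and an antiderivative φ
  set u : ℝ → ℝ := fun t => a t * b t with hu_def
  have haC : Continuous a := Differentiable.continuous fun x => (ha x).differentiableAt
  have hbC : Continuous b := Differentiable.continuous fun x => (hb x).differentiableAt
  have hcont : Continuous u := haC.mul hbC
  set φ : ℝ → ℝ := fun t => ∫ x in (0:ℝ)..t, u x with hφ_def
  have hφ : ∀ t, HasDerivAt φ (u t) t := fun t =>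
    (hcont.integral_hasStrictDerivAt 0 t).hasDerivAt
  -- Step 1 : a = b everywhere (balanced initialization is preserved)
  have hab : ∀ t, a t = b t := by
    intro t
    have hg : ∀ t, HasDerivAt (fun t => (a t - b t) * exp (s * t - φ t)) 0 t := by
      intro t
      have hlin : HasDerivAt (fun t : ℝ => s * t) s t := by
        simpa using (hasDerivAt_id t).const_mul s
      have hexp : HasDerivAt (fun t => exp (s * t - φ t))
          (exp (s * t - φ t) * (s - u t)) t := (hlin.sub (hφ t)).exp
      have := ((ha t).sub (hb t)).mul hexp
      convert this using 1
      rfl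
      rfl
      rfl
      simp only [hu_def, Pi.sub_apply]
      ring
    have h0 : (a t - b t) * exp (s * t - φ t)
        = (a 0 - b 0) * exp (s * 0 - φ 0) := const_of_hasDerivAt_zero' hg t
    rw [hbal, sub_self, zero_mul] at h0
    have := mul_eq_zero.1 h0
    rcases this with h | h
    · linarith [sub_eq_zero.1 h]
    · exact absurd h (exp_ne_zero _)
  -- Step 2 : u satisfies the logistic equation u' = 2u(s-u)
  have hu' : ∀ t, HasDerivAt u (2 * u t * (s - u t)) t := by
    intro t
    have := (ha t).mul (hb t)
    convert this using 1
    rfl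
    rfl
    rfl
    simp only [hu_def]
    rw [hab t]
    ring
  -- the candidate solution f and positivity of its denominator
  set den : ℝ → ℝ := fun t => exp (2 * s * t) - 1 + k with hden_def
  have hden_pos : ∀ t, 0 < den t := by
    intro t
    have := exp_pos (2 * s * t)
    simp only [hden_def]
    nlinarith
  have hden_ne : ∀ t, den t ≠ 0 := fun t => ne_of_gt (hden_pos t)
  set f : ℝ → ℝ := fun t => s * exp (2 * s * t) / den t with hf_def
  have hE : ∀ t, HasDerivAt (fun t => exp (2 * s * t)) (exp (2 * s * t) * (2 * s)) t := by
    intro t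
    have hlin : HasDerivAt (fun t : ℝ => 2 * s * t) (2 * s) t := by
      simpa using (hasDerivAt_id t).const_mul (2 * s)
    exact hlin.exp
  have hden' : ∀ t, HasDerivAt den (exp (2 * s * t) * (2 * s)) t := by
    intro t
    simpa [hden_def] using (((hE t).sub_const 1).add_const k)
  have hf' : ∀ t, HasDerivAt f (2 * f t * (s - f t)) t := by
    intro t
    have hnum : HasDerivAt (fun t => s * exp (2 * s * t))
        (s * (exp (2 * s * t) * (2 * s))) t := (hE t).const_mul s
    have := hnum.div (hden' t) (hden_ne t)
    convert this using 1
    rfl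
    rfl
    rfl
    simp only [hf_def]
    exact aux1' s (exp (2 * s * t)) (den t) (hden_ne t)
  -- Step 3 : the difference (u - f) times an integrating factor is constant
  have hM : ∀ t, HasDerivAt (fun t => exp (2 * φ t - 2 * s * t) * den t)
      (exp (2 * φ t - 2 * s * t) * (2 * u t - 2 * s) * den t
        + exp (2 * φ t - 2 * s * t) * (exp (2 * s * t) * (2 * s))) t := by
    intro t
    have hlin : HasDerivAt (fun t : ℝ => 2 * s * t) (2 * s) t := by
      simpa using (hasDerivAt_id t).const_mul (2 * s)
    have hin : HasDerivAt (fun t => 2 * φ t - 2 * s * t) (2 * u t - 2 * s) t :=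
      ((hφ t).const_mul 2).sub hlin
    exact hin.exp.mul (hden' t)
  have hh : ∀ t, HasDerivAt
      (fun t => (u t - f t) * (exp (2 * φ t - 2 * s * t) * den t)) 0 t := by
    intro t
    have := ((hu' t).sub (hf' t)).mul (hM t)
    convert this using 1
    rfl
    rfl
    rfl
    simp only [hf_def]
    exact aux2' s (exp (2 * s * t)) (den t) (exp (2 * φ t - 2 * s * t)) (u t) (hden_ne t)
  have hconst : ∀ t, (u t - f t) * (exp (2 * φ t - 2 * s * t) * den t)
      = (u 0 - f 0) * (exp (2 * φ 0 - 2 * s * 0) * den 0) :=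
    fun t => const_of_hasDerivAt_zero' hh t
  -- initial values
  have hu0 : u 0 = u₀ := by
    simp only [hu_def]
    rw [← hbal, ← sq]
    exact hinit
  have hf0 : f 0 = u₀ := by
    have hs : s ≠ 0 := (hu₀.trans hu₀s).ne'
    simp only [hf_def, hden_def, hk_def]
    norm_num
    rw [div_div_eq_mul_div, mul_comm, mul_div_assoc, div_self hs, mul_one]
  -- conclude u = f everywhere
  have hueq : ∀ t, u t = f t := by
    intro t
    have h := hconst t
    rw [hu0, hf0, sub_self, zero_mul] at h
    have hne : exp (2 * φ t - 2 * s * t) * den t ≠ 0 :=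
      mul_ne_zero (exp_ne_zero _) (hden_ne t)
    have := (mul_eq_zero.1 h).resolve_right hne
    linarith [sub_eq_zero.1 this]
  intro t _
  have h1 : a t * b t = s * exp (2 * s * t) / (exp (2 * s * t) - 1 + s / u₀) := by
    have := hueq t
    simpa [hu_def, hf_def, hden_def, hk_def] using this
  exact ⟨h1, by rw [h1]⟩
end
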